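/- Let Δ be a simplicial forest with n vertices and more than one facet, and suppose β_{i,n}(Δ) ≠ 0 for some i. Then for every facet G of Δ, the induced subcollection Δ_[G] has a complement Δ_[u] in Δ satisfying β_{i−1,|u|}(Δ_[u]) ≠ 0. -/

import Mathlib

namespace FacetPaper

variable (k : Type*) [Field k]
variable {V : Type*} [DecidableEq V] [LinearOrder V]

/-- The vertex set of a simplicial complex given by its (finite) set of facets. -/
def vertexSet (Δ : Finset (Finset V)) : Finset V := Δ.sup id

/-- The induced subcollection `Δ_[u]`: the complex whose facets are the facets
of `Δ` contained in `u`. -/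
def induced (Δ : Finset (Finset V)) (u : Finset V) : Finset (Finset V) :=
  Δ.filter (fun F => F ⊆ u)

/-- `F` is a leaf of the complex with facet set `Δ`. -/
def IsLeaf (Δ : Finset (Finset V)) (F : Finset V) : Prop :=
  F ∈ Δ ∧ (Δ = {F} ∨ ∃ G ∈ Δ, G ≠ F ∧ ∀ H ∈ Δ, H ≠ F → F ∩ H ⊆ G)

/-- A simplicial forest: every nonempty subcollection has a leaf. -/
def IsForest (Δ : Finset (Finset V)) : Prop :=
  ∀ Γ ⊆ Δ, Γ.Nonempty → ∃ F, IsLeaf Γ F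

/-- The facet `F` has a free vertex: a vertex of `F` lying in no other facet. -/
def HasFreeVertex (Δ : Finset (Finset V)) (F : Finset V) : Prop :=
  ∃ x ∈ F, ∀ G ∈ Δ, x ∈ G → G = F

/-- Minimal elements, under inclusion, of a finite family of finite sets. -/
def minimals (S : Finset (Finset V)) : Finset (Finset V) :=
  S.filter (fun A => ∀ B ∈ S, B ⊆ A → B = A)

/-- The localization (restriction) `Δ_W`: minimal elements of the nonempty
intersections of facets with `W`. -/
def localization (Δ : Finset (Finset V)) (W : Finset V) : Finset (Finset V) :=
  minimals ((Δ.image (fun F => F ∩ W)).filter (fun A => A.Nonempty))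

/-- `Γ = (Δ ∖ ⟨F⟩)_{F̄}`: the minimal elements under inclusion of
`{G ∖ F : G a facet of Δ, G ≠ F}`. -/
def gammaOf (Δ : Finset (Finset V)) (F : Finset V) : Finset (Finset V) :=
  minimals ((Δ.erase F).image (fun G => G \ F))

/-- `Δ_[u]` and `Δ_[v]` are complements in `Δ`: `u`, `v` are proper subsets of the
vertex set, `u ∪ v = V(Δ)`, and `Δ_[u]`, `Δ_[v]` have no facet in common. -/
def Complements (Δ : Finset (Finset V)) (u v : Finset V) : Prop :=
  u ⊂ vertexSet Δ ∧ v ⊂ vertexSet Δ ∧ u ∪ v = vertexSet Δ ∧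
    ∀ F ∈ Δ, ¬ (F ∈ induced Δ u ∧ F ∈ induced Δ v)

/-! ### Graded Betti numbers via the Taylor complex

For a square-free monomial ideal `I` with facet complex `Δ` (facets = supports of
the minimal monomial generators), the Taylor complex is a graded free resolution of
`S/I`, so `Tor_i^S(S/I,k)` is the `i`-th homology of the Taylor complex tensored
with `k`.  The resulting complex of `k`-vector spaces has basis the subsets `σ` of
the set of generators, a basis element `σ` sitting in homological degree `|σ|` and
multidegree `lcm σ` (= the union of the supports), with differential
`∂σ = Σ_{F ∈ σ, lcm(σ∖F) = lcm σ} ± (σ ∖ F)`.  The multigraded Betti number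
`β_{i,u}(S/I) = dim_k Tor_i(S/I,k)_u` is the dimension of the homology of the
multidegree-`u` strand in homological degree `i`. -/

/-- The sign `(-1)^{position of F in σ}` (using the colexicographic order). -/
noncomputable def taylorSign (σ : Finset (Finset V)) (F : Finset V) : k :=
  (-1 : k) ^ (σ.filter (fun G => toColex G < toColex F)).card

/-- The Taylor differential (tensored with `k`) on a basis element. -/
noncomputable def taylorD (σ : Finset (Finset V)) : Finset (Finset V) →₀ k :=
  ∑ F ∈ σ, if (σ.erase F).sup id = σ.sup id then
    taylorSign k σ F • Finsupp.single (σ.erase F) (1 : k) else 0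

/-- The Taylor differential as a linear map. -/
noncomputable def taylorDiff : (Finset (Finset V) →₀ k) →ₗ[k] (Finset (Finset V) →₀ k) :=
  Finsupp.lsum k (fun σ => LinearMap.toSpanSingleton k _ (taylorD k σ))

/-- The strand of the Taylor complex (tensored with `k`) of the complex `Δ` in
homological degree `i` and multidegree `u`. -/
noncomputable def strand (Δ : Finset (Finset V)) (i : ℕ) (u : Finset V) :
    Submodule k (Finset (Finset V) →₀ k) :=
  Submodule.span k
    {x | ∃ σ : Finset (Finset V), σ ⊆ Δ ∧ σ.card = i ∧ σ.sup id = u ∧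
      x = Finsupp.single σ (1 : k)}

/-- Cycles of the multidegree-`u` strand in homological degree `i`. -/
noncomputable def taylorCycles (Δ : Finset (Finset V)) (i : ℕ) (u : Finset V) :
    Submodule k (Finset (Finset V) →₀ k) :=
  LinearMap.ker (taylorDiff k) ⊓ strand k Δ i u

/-- Boundaries of the multidegree-`u` strand in homological degree `i`. -/
noncomputable def taylorBoundaries (Δ : Finset (Finset V)) (i : ℕ) (u : Finset V) :
    Submodule k (Finset (Finset V) →₀ k) :=
  Submodule.map (taylorDiff k) (strand k Δ (i + 1) u)

/-- The multigraded Betti number `β_{i,u}(Δ) = dim_k Tor_i^S(S/F(Δ), k)_u`,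
computed as the homology (dimension of cycles minus dimension of boundaries; all
these spaces are finite dimensional and the boundaries lie inside the cycles) of
the multidegree-`u` strand of the Taylor complex tensored with `k`. -/
noncomputable def multigradedBetti (Δ : Finset (Finset V)) (i : ℕ) (u : Finset V) : ℕ :=
  Module.finrank k ↥(taylorCycles k Δ i u) -
    Module.finrank k ↥(taylorBoundaries k Δ i u ⊓ taylorCycles k Δ i u)

/-- The graded Betti number `β_{i,j}(Δ) = dim_k Tor_i^S(S/F(Δ), k)_j`, the sum of
the multigraded Betti numbers over the square-free multidegrees of degree `j`
supported on the vertices of `Δ`. -/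
noncomputable def gradedBetti (Δ : Finset (Finset V)) (i j : ℕ) : ℕ :=
  ∑ u ∈ (vertexSet Δ).powersetCard j, multigradedBetti k Δ i u

/-- `t_c(I)`:  the largest internal degree `j` with `β_{c,j} ≠ 0`. -/
noncomputable def tdeg (Δ : Finset (Finset V)) (c : ℕ) : ℕ :=
  sSup {j | gradedBetti k Δ c j ≠ 0}

/-- The projective dimension of `S/F(Δ)`: the largest homological degree with a
nonvanishing Betti number. -/
noncomputable def projDim (Δ : Finset (Finset V)) : ℕ :=
  sSup {c | ∃ j, gradedBetti k Δ c j ≠ 0}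

/-- Membership in the lcm lattice `LCM(I)`: `m_u` is an lcm of a set of generators. -/
def MemLcmLattice (Δ : Finset (Finset V)) (u : Finset V) : Prop :=
  ∃ A ⊆ Δ, u = A.sup id

/-- `m_u` and `m_v` are complements in the lcm lattice: their lcm is `1̂` (the lcm of
all the generators) and their gcd `m_{u ∩ v}` is not in the ideal (no generator
divides it). -/
def LcmComplements (Δ : Finset (Finset V)) (u v : Finset V) : Prop :=
  u ∪ v = vertexSet Δ ∧ ¬ ∃ F ∈ Δ, F ⊆ u ∩ v


section Aux

open Finsupp

variable {k : Type*} [Field k] {V : Type*} [DecidableEq V] [LinearOrder V]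

lemma taylorSign_mul_self (σ : Finset (Finset V)) (F : Finset V) :
    taylorSign k σ F * taylorSign k σ F = 1 := by
  unfold taylorSign
  rw [← pow_add]
  exact Even.neg_one_pow ⟨_, rfl⟩

lemma taylorSign_ne_zero (σ : Finset (Finset V)) (F : Finset V) :
    taylorSign k σ F ≠ 0 := by
  unfold taylorSign; exact pow_ne_zero _ (by norm_num)

lemma taylorSign_erase (σ : Finset (Finset V)) {F F' : Finset V} (hF : F ∈ σ) (hne : F ≠ F') :
    taylorSign k (σ.erase F) F' =
      (if toColex F < toColex F' then (-1 : k) else 1)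
        * taylorSign k σ F' := by
  unfold taylorSign
  rw [Finset.filter_erase]
  by_cases h : toColex F < toColex F'
  · have hmem : F ∈ σ.filter (fun G => toColex G < toColex F') :=
      Finset.mem_filter.2 ⟨hF, h⟩
    obtain ⟨d, hd⟩ : ∃ d, (σ.filter (fun G => toColex G < toColex F')).card = d + 1 :=
      ⟨_, (Finset.card_erase_add_one hmem).symm⟩
    rw [Finset.card_erase_of_mem hmem, hd, if_pos h]
    simp [pow_succ]
  · have hnm : F ∉ σ.filter (fun G => toColex G < toColex F') :=
      fun hmem => h (Finset.mem_filter.1 hmem).2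
    rw [Finset.erase_eq_of_notMem hnm, if_neg h, one_mul]

lemma taylorSign_prod (σ : Finset (Finset V)) {F G' : Finset V} (hF : F ∈ σ) (hG : G' ∈ σ)
    (hne : F ≠ G') :
    taylorSign k σ G' * taylorSign k (σ.erase G') F
      = -(taylorSign k (σ.erase F) G' * taylorSign k σ F) := by
  rw [taylorSign_erase σ hG hne.symm, taylorSign_erase σ hF hne]
  have : toColex F ≠ toColex G' := by
    simpa [toColex_inj] using hne
  rcases this.lt_or_gt with h | h
  · rw [if_neg (asymm h), if_pos h]; ring
  · rw [if_pos h, if_neg (asymm h)]; ring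

end Aux

/-- The span of the basis elements `single σ 1` over the `σ` satisfying `P`. -/
def SP (k : Type*) [Field k] {V : Type*} [DecidableEq V] [LinearOrder V]
    (P : Finset (Finset V) → Prop) : Submodule k (Finset (Finset V) →₀ k) :=
  Finsupp.supported k k {σ | P σ}

section Aux2

open Finsupp

variable {k : Type*} [Field k] {V : Type*} [DecidableEq V] [LinearOrder V]

lemma mem_SP {P : Finset (Finset V) → Prop} {x : Finset (Finset V) →₀ k} :
    x ∈ SP k P ↔ ∀ σ ∈ x.support, P σ := by
  rw [SP, Finsupp.mem_supported]
  constructor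
  · exact fun h σ hσ => h hσ
  · exact fun h σ hσ => h σ hσ

lemma SP_mono {P Q : Finset (Finset V) → Prop} (h : ∀ σ, P σ → Q σ) :
    SP k P ≤ (SP k Q : Submodule k (Finset (Finset V) →₀ k)) :=
  Finsupp.supported_mono (fun σ hσ => h σ hσ)

lemma single_mem_SP {P : Finset (Finset V) → Prop} {σ : Finset (Finset V)} (c : k) (h : P σ) :
    Finsupp.single σ c ∈ SP k P :=
  Finsupp.single_mem_supported k c h

lemma strand_eq_SP (Δ : Finset (Finset V)) (i : ℕ) (u : Finset V) :
    strand k Δ i u = SP k (fun σ => σ ⊆ Δ ∧ σ.card = i ∧ σ.sup id = u) := by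
  rw [SP, Finsupp.supported_eq_span_single, strand]
  congr 1
  ext x
  constructor
  · rintro ⟨σ, h1, h2, h3, rfl⟩
    exact ⟨σ, ⟨h1, h2, h3⟩, rfl⟩
  · rintro ⟨σ, ⟨h1, h2, h3⟩, rfl⟩
    exact ⟨σ, h1, h2, h3, rfl⟩

lemma taylorDiff_eq_sum (x : Finset (Finset V) →₀ k) :
    taylorDiff k x = ∑ σ ∈ x.support, x σ • taylorD k σ := by
  rw [taylorDiff, Finsupp.lsum_apply]
  rfl

lemma taylorDiff_single (σ : Finset (Finset V)) (c : k) :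
    taylorDiff k (Finsupp.single σ c) = c • taylorD k σ := by
  rw [taylorDiff, Finsupp.lsum_single, LinearMap.toSpanSingleton_apply]

lemma taylorDiff_apply (x : Finset (Finset V) →₀ k) (τ : Finset (Finset V)) :
    taylorDiff k x τ = ∑ σ ∈ x.support, x σ * taylorD k σ τ := by
  rw [taylorDiff_eq_sum, Finset.sum_apply']
  refine Finset.sum_congr rfl fun σ _ => ?_
  rw [Finsupp.smul_apply, smul_eq_mul]

lemma taylorD_apply_ne (σ τ : Finset (Finset V)) (h : ∀ F ∈ σ, σ.erase F ≠ τ) :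
    taylorD k σ τ = 0 := by
  rw [taylorD, Finset.sum_apply']
  refine Finset.sum_eq_zero fun F hF => ?_
  split_ifs
  · rw [Finsupp.smul_apply, Finsupp.single_apply, if_neg (h F hF)]
    simp
  · rfl

lemma erase_inj_of_mem {σ : Finset (Finset V)} {F F' : Finset V} (hF : F ∈ σ) (hF' : F' ∈ σ)
    (h : σ.erase F = σ.erase F') : F = F' := by
  by_contra hne
  exact Finset.notMem_erase F σ (h ▸ Finset.mem_erase.2 ⟨hne, hF⟩)

lemma taylorD_apply_erase (σ : Finset (Finset V)) {F : Finset V} (hF : F ∈ σ) :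
    taylorD k σ (σ.erase F) =
      if (σ.erase F).sup id = σ.sup id then taylorSign k σ F else 0 := by
  rw [taylorD, Finset.sum_apply']
  rw [Finset.sum_eq_single_of_mem F hF]
  · split_ifs with h
    · rw [Finsupp.smul_apply, Finsupp.single_apply, if_pos rfl, smul_eq_mul, mul_one]
    · rfl
  · intro F' hF' hne
    have hne' : σ.erase F' ≠ σ.erase F := fun he => hne (erase_inj_of_mem hF' hF he)
    split_ifs
    · rw [Finsupp.smul_apply, Finsupp.single_apply, if_neg hne']
      simp
    · rfl

lemma taylorD_mem_SP {P : Finset (Finset V) → Prop} (σ : Finset (Finset V))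
    (h : ∀ F ∈ σ, (σ.erase F).sup id = σ.sup id → P (σ.erase F)) :
    taylorD k σ ∈ SP k P := by
  rw [taylorD]
  refine Submodule.sum_mem _ fun F hF => ?_
  split_ifs with hc
  · exact Submodule.smul_mem _ _ (single_mem_SP _ (h F hF hc))
  · exact Submodule.zero_mem _

lemma taylorDiff_mem_SP {P Q : Finset (Finset V) → Prop} {x : Finset (Finset V) →₀ k}
    (hx : x ∈ SP k P)
    (h : ∀ σ, P σ → ∀ F ∈ σ, (σ.erase F).sup id = σ.sup id → Q (σ.erase F)) :
    taylorDiff k x ∈ SP k Q := by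
  rw [taylorDiff_eq_sum]
  exact Submodule.sum_mem _ fun σ hσ =>
    Submodule.smul_mem _ _ (taylorD_mem_SP σ (h σ (mem_SP.1 hx σ hσ)))

lemma sup_erase_erase (σ : Finset (Finset V)) (F F' : Finset V)
    (h : ((σ.erase F).erase F').sup id = σ.sup id) :
    (σ.erase F').sup id = σ.sup id := by
  refine le_antisymm (Finset.sup_mono (Finset.erase_subset _ _)) ?_
  rw [← h, Finset.erase_right_comm]
  exact Finset.sup_mono (Finset.erase_subset _ _)

lemma taylorDiff_taylorD (σ : Finset (Finset V)) :
    taylorDiff k (taylorD k σ) = (0 : Finset (Finset V) →₀ k) := by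
  classical
  set T : Finset V → Finset V → (Finset (Finset V) →₀ k) := fun F F' =>
    if F' ≠ F ∧ (σ.erase F).sup id = σ.sup id ∧
        ((σ.erase F).erase F').sup id = (σ.erase F).sup id
      then (taylorSign k σ F * taylorSign k (σ.erase F) F') •
        Finsupp.single ((σ.erase F).erase F') (1:k) else 0 with hT
  have step : taylorDiff k (taylorD k σ) = ∑ F ∈ σ, ∑ F' ∈ σ, T F F' := by
    rw [taylorD, map_sum]
    refine Finset.sum_congr rfl fun F hF => ?_
    have hTF : T F F = 0 := by simp [hT]
    split_ifs with hc
    · rw [map_smul, taylorDiff_single, one_smul, taylorD, Finset.smul_sum]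
      rw [← Finset.sum_erase σ (f := T F) hTF]
      refine Finset.sum_congr rfl fun F' hF' => ?_
      have hne : F' ≠ F := (Finset.mem_erase.1 hF').1
      rw [smul_ite, smul_smul, smul_zero]
      simp only [hT, hne, hc, true_and, ne_eq, not_false_eq_true, if_true]
    · rw [map_zero]
      refine (Finset.sum_eq_zero fun F' _ => ?_).symm
      simp only [hT]
      rw [if_neg (fun hx => hc hx.2.1)]
  rw [step, ← Finset.sum_product']
  refine Finset.sum_involution (fun p _ => (p.2, p.1)) ?_ ?_ ?_ (fun p hp => rfl)
  · rintro ⟨F, F'⟩ hp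
    simp only [Finset.mem_product] at hp
    obtain ⟨hF, hF'⟩ := hp
    simp only [hT]
    by_cases hne : F' = F
    · subst hne
      simp
    · have hne' : ¬ (F = F') := fun h => hne h.symm
      by_cases hcond : (σ.erase F).sup id = σ.sup id ∧
          ((σ.erase F).erase F').sup id = (σ.erase F).sup id
      · have hsupFF' : ((σ.erase F).erase F').sup id = σ.sup id := hcond.2.trans hcond.1
        have h1 : (σ.erase F').sup id = σ.sup id := sup_erase_erase σ F F' hsupFF'
        have h2 : ((σ.erase F').erase F).sup id = (σ.erase F').sup id := by
          rw [Finset.erase_right_comm, hsupFF', h1]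
        rw [if_pos ⟨hne, hcond.1, hcond.2⟩, if_pos ⟨hne', h1, h2⟩]
        have hsign : taylorSign k σ F' * taylorSign k (σ.erase F') F
            = -(taylorSign k σ F * taylorSign k (σ.erase F) F') := by
          have := taylorSign_prod (k := k) σ hF hF' hne'
          rw [mul_comm] at this
          linear_combination this
        rw [hsign, Finset.erase_right_comm (a := F') (b := F)]
        rw [neg_smul]
        rw [Finset.erase_right_comm (a := F) (b := F')]
        exact add_neg_cancel _
      · have hcond' : ¬ ((σ.erase F').sup id = σ.sup id ∧
            ((σ.erase F').erase F).sup id = (σ.erase F').sup id) := by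
          intro hc2
          apply hcond
          have hsup0 : ((σ.erase F').erase F).sup id = σ.sup id := hc2.2.trans hc2.1
          have h1 : (σ.erase F).sup id = σ.sup id := sup_erase_erase σ F' F hsup0
          rw [Finset.erase_right_comm] at hsup0
          exact ⟨h1, hsup0.trans h1.symm⟩
        rw [if_neg (fun hx => hcond ⟨hx.2.1, hx.2.2⟩), if_neg (fun hx => hcond' ⟨hx.2.1, hx.2.2⟩)]
        exact add_zero 0
  · rintro ⟨F, F'⟩ hp hfne heq
    have hFF : F' = F := congrArg Prod.fst heq
    apply hfne
    simp [hT, hFF]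
  · rintro ⟨F, F'⟩ hp
    simp only [Finset.mem_product] at hp ⊢
    exact ⟨hp.2, hp.1⟩

lemma taylorDiff_taylorDiff (x : Finset (Finset V) →₀ k) :
    taylorDiff k (taylorDiff k x) = 0 := by
  rw [taylorDiff_eq_sum (x := x), map_sum]
  refine Finset.sum_eq_zero fun σ _ => ?_
  rw [map_smul, taylorDiff_taylorD, smul_zero]

end Aux2

/-- Adjoin the facet `G` (with appropriate sign). -/
noncomputable def Jm (k : Type*) [Field k] {V : Type*} [DecidableEq V] [LinearOrder V]
    (G : Finset V) : (Finset (Finset V) →₀ k) →ₗ[k] (Finset (Finset V) →₀ k) :=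
  Finsupp.lsum k fun τ => LinearMap.toSpanSingleton k _
    (taylorSign k (insert G τ) G • Finsupp.single (insert G τ) (1:k))

/-- Remove the facet `G` (with appropriate sign). -/
noncomputable def Km (k : Type*) [Field k] {V : Type*} [DecidableEq V] [LinearOrder V]
    (G : Finset V) : (Finset (Finset V) →₀ k) →ₗ[k] (Finset (Finset V) →₀ k) :=
  Finsupp.lsum k fun σ => LinearMap.toSpanSingleton k _
    (taylorSign k σ G • Finsupp.single (σ.erase G) (1:k))

section Aux3

open Finsupp

variable {k : Type*} [Field k] {V : Type*} [DecidableEq V] [LinearOrder V] {G : Finset V}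

lemma Jm_single (τ : Finset (Finset V)) (c : k) :
    Jm k G (Finsupp.single τ c)
      = (c * taylorSign k (insert G τ) G) • Finsupp.single (insert G τ) (1:k) := by
  rw [Jm, Finsupp.lsum_single, LinearMap.toSpanSingleton_apply, smul_smul]

lemma Km_single (σ : Finset (Finset V)) (c : k) :
    Km k G (Finsupp.single σ c)
      = (c * taylorSign k σ G) • Finsupp.single (σ.erase G) (1:k) := by
  rw [Km, Finsupp.lsum_single, LinearMap.toSpanSingleton_apply, smul_smul]

lemma Jm_mem_SP {P Q : Finset (Finset V) → Prop} {x : Finset (Finset V) →₀ k}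
    (hx : x ∈ SP k P) (h : ∀ σ, P σ → Q (insert G σ)) : Jm k G x ∈ SP k Q := by
  rw [Jm, Finsupp.lsum_apply]
  refine Submodule.sum_mem _ fun σ hσ => ?_
  simp only [LinearMap.toSpanSingleton_apply, smul_smul]
  exact Submodule.smul_mem _ _ (single_mem_SP _ (h σ (mem_SP.1 hx σ hσ)))

lemma Km_mem_SP {P Q : Finset (Finset V) → Prop} {x : Finset (Finset V) →₀ k}
    (hx : x ∈ SP k P) (h : ∀ σ, P σ → Q (σ.erase G)) : Km k G x ∈ SP k Q := by
  rw [Km, Finsupp.lsum_apply]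
  refine Submodule.sum_mem _ fun σ hσ => ?_
  simp only [LinearMap.toSpanSingleton_apply, smul_smul]
  exact Submodule.smul_mem _ _ (single_mem_SP _ (h σ (mem_SP.1 hx σ hσ)))

lemma Km_Jm {x : Finset (Finset V) →₀ k} (hx : x ∈ SP k (fun σ => G ∉ σ)) :
    Km k G (Jm k G x) = x := by
  conv_lhs => rw [← Finsupp.sum_single x, map_finsuppSum, map_finsuppSum]
  conv_rhs => rw [← Finsupp.sum_single x]
  refine Finsupp.sum_congr fun τ hτ => ?_
  have hGτ : G ∉ τ := mem_SP.1 hx τ hτ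
  rw [Jm_single, map_smul, Km_single, one_mul, Finset.erase_insert hGτ, smul_smul,
    Finsupp.smul_single, smul_eq_mul, mul_one]
  congr 1
  linear_combination (x τ) * taylorSign_mul_self (k := k) (insert G τ) G

lemma Jm_Km {x : Finset (Finset V) →₀ k} (hx : x ∈ SP k (fun σ => G ∈ σ)) :
    Jm k G (Km k G x) = x := by
  conv_lhs => rw [← Finsupp.sum_single x, map_finsuppSum, map_finsuppSum]
  conv_rhs => rw [← Finsupp.sum_single x]
  refine Finsupp.sum_congr fun σ hσ => ?_
  have hGσ : G ∈ σ := mem_SP.1 hx σ hσ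
  rw [Km_single, map_smul, Jm_single, one_mul, Finset.insert_erase hGσ, smul_smul,
    Finsupp.smul_single, smul_eq_mul, mul_one]
  congr 1
  linear_combination (x σ) * taylorSign_mul_self (k := k) σ G

lemma sign_four {a b c d : k} (hb : b * b = 1) (hd : d * d = 1) (h : a * b = -(c * d)) :
    d * a = -(c * b) := by
  linear_combination (b * d) * h - (a * d) * hb - (c * b) * hd

/-- The key identity: the Taylor differential applied to `{G} ∪ τ` agrees, modulo an
error term supported on sets with smaller `sup`, with `τ` minus the image of the
Taylor differential of `τ`. -/
lemma key2 (τ : Finset (Finset V)) (hGτ : G ∉ τ) :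
    taylorDiff k (Jm k G (Finsupp.single τ (1:k))) + Jm k G (taylorD k τ)
        - (if G ≤ τ.sup id then Finsupp.single τ (1:k) else 0)
      ∈ SP k (fun σ => ∃ F ∈ τ, σ = insert G (τ.erase F) ∧
          (τ.erase F).sup id ≠ τ.sup id ∧ σ.sup id = (insert G τ).sup id) := by
  classical
  set s0 := taylorSign k (insert G τ) G with hs0
  set p : Finset V → Prop := fun F => (τ.erase F).sup id = τ.sup id with hp
  set A : Finset V → (Finset (Finset V) →₀ k) := fun F =>
    (if ((insert G τ).erase F).sup id = (insert G τ).sup id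
      then taylorSign k (insert G τ) F • Finsupp.single ((insert G τ).erase F) (1:k) else 0)
    with hA
  have heq : ∀ F ∈ τ, (insert G τ).erase F = insert G (τ.erase F) := by
    intro F hF
    exact Finset.erase_insert_of_ne (fun h => hGτ (h ▸ hF))
  have e2 : taylorDiff k (Jm k G (Finsupp.single τ (1:k)))
      = s0 • taylorD k (insert G τ) := by
    rw [Jm_single, one_mul, map_smul, taylorDiff_single, one_smul]
  have esup : (insert G τ).sup id = G ⊔ τ.sup id := by
    rw [Finset.sup_insert]; rfl
  have e3 : taylorD k (insert G τ)
      = (if G ≤ τ.sup id then s0 • Finsupp.single τ (1:k) else 0)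
        + ((∑ F ∈ τ.filter p, A F) + (∑ F ∈ τ.filter (fun F => ¬ p F), A F)) := by
    rw [taylorD, Finset.sum_insert hGτ, Finset.sum_filter_add_sum_filter_not τ p]
    congr 1
    rw [Finset.erase_insert hGτ]
    refine if_congr ?_ rfl rfl
    rw [esup, eq_comm, sup_eq_right]
  have e4 : s0 • (if G ≤ τ.sup id then s0 • Finsupp.single τ (1:k) else 0)
      = (if G ≤ τ.sup id then Finsupp.single τ (1:k) else 0) := by
    rw [smul_ite, smul_smul, taylorSign_mul_self, one_smul, smul_zero]
  have e5 : s0 • (∑ F ∈ τ.filter p, A F) + Jm k G (taylorD k τ) = 0 := by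
    rw [taylorD, map_sum, ← Finset.sum_filter_add_sum_filter_not τ p]
    have hz : (∑ F ∈ τ.filter (fun F => ¬ p F), Jm k G (if (τ.erase F).sup id = τ.sup id
        then taylorSign k τ F • Finsupp.single (τ.erase F) (1:k) else 0)) = 0 := by
      refine Finset.sum_eq_zero fun F hF => ?_
      rw [if_neg (Finset.mem_filter.1 hF).2, map_zero]
    rw [hz, add_zero, Finset.smul_sum, ← Finset.sum_add_distrib]
    refine Finset.sum_eq_zero fun F hF => ?_
    obtain ⟨hFτ, hpF⟩ := Finset.mem_filter.1 hF
    have hGF : G ≠ F := fun h => hGτ (h ▸ hFτ)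
    have hFi : F ∈ insert G τ := Finset.mem_insert_of_mem hFτ
    have hGi : G ∈ insert G τ := Finset.mem_insert_self G τ
    have hpF' : (τ.erase F).sup id = τ.sup id := hpF
    have hsupeq : ((insert G τ).erase F).sup id = (insert G τ).sup id := by
      rw [heq F hFτ, esup, Finset.sup_insert, hpF']
      rfl
    have hc : taylorSign k τ F = taylorSign k ((insert G τ).erase G) F := by
      rw [Finset.erase_insert hGτ]
    have hb2 : taylorSign k (insert G (τ.erase F)) G
        = taylorSign k ((insert G τ).erase F) G := by rw [heq F hFτ]
    have hkey : s0 * taylorSign k (insert G τ) F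
        = -(taylorSign k τ F * taylorSign k (insert G (τ.erase F)) G) := by
      have h := taylorSign_prod (k := k) (insert G τ) hGi hFi hGF
      have hb := taylorSign_mul_self (k := k) ((insert G τ).erase F) G
      have hd := taylorSign_mul_self (k := k) (insert G τ) G
      rw [hc, hb2, hs0]
      exact sign_four hb hd h
    simp only [hA]
    rw [if_pos hsupeq, if_pos hpF', map_smul, Jm_single, one_mul, smul_smul, smul_smul,
      heq F hFτ, ← add_smul, hkey, neg_add_cancel, zero_smul]
  have expr_eq : taylorDiff k (Jm k G (Finsupp.single τ (1:k))) + Jm k G (taylorD k τ)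
      - (if G ≤ τ.sup id then Finsupp.single τ (1:k) else 0)
      = s0 • ∑ F ∈ τ.filter (fun F => ¬ p F), A F := by
    rw [e2, e3, smul_add, smul_add, e4]
    have habel : ∀ I P Q J : Finset (Finset V) →₀ k,
        I + (P + Q) + J - I = (P + J) + Q := by
      intro I P Q J; abel
    rw [habel, e5, zero_add]
  rw [expr_eq]
  refine Submodule.smul_mem _ _ (Submodule.sum_mem _ fun F hF => ?_)
  obtain ⟨hFτ, hpF⟩ := Finset.mem_filter.1 hF
  simp only [hA]
  split_ifs with hcond
  · refine Submodule.smul_mem _ _ (single_mem_SP _ ?_)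
    exact ⟨F, hFτ, heq F hFτ, hpF, hcond⟩
  · exact Submodule.zero_mem _

end Aux3

section Aux4

open Finsupp

variable {k : Type*} [Field k] {V : Type*} [DecidableEq V] [LinearOrder V]

/-- If `x` is a cycle all whose components contain `G` and have top multidegree `W`,
then every component satisfies `(σ \ G).sup ≠ W` (the `A⁼`-part of a cycle vanishes). -/
lemma lemE {G W : Finset V} {x : Finset (Finset V) →₀ k}
    (hx : ∀ σ ∈ x.support, G ∈ σ ∧ σ.sup id = W)
    (hc : taylorDiff k x = 0) :
    ∀ σ ∈ x.support, (σ.erase G).sup id ≠ W := by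
  intro σ₀ hσ₀ hgV
  obtain ⟨hGσ₀, hsσ₀⟩ := hx σ₀ hσ₀
  have h0 : taylorDiff k x (σ₀.erase G) = 0 := by rw [hc]; rfl
  rw [taylorDiff_apply] at h0
  rw [Finset.sum_eq_single_of_mem σ₀ hσ₀ ?hother] at h0
  case hother =>
    intro σ hσ hne
    obtain ⟨hGσ, hsσ⟩ := hx σ hσ
    rw [taylorD_apply_ne, mul_zero]
    intro F hF hFeq
    by_cases hFG : F = G
    · subst hFG
      exact hne (by rw [← Finset.insert_erase hGσ, hFeq, Finset.insert_erase hGσ₀])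
    · exact Finset.notMem_erase G σ₀ (hFeq ▸ Finset.mem_erase.2 ⟨fun h => hFG h.symm, hGσ⟩)
  have hD : taylorD k σ₀ (σ₀.erase G) = taylorSign k σ₀ G := by
    rw [taylorD_apply_erase σ₀ hGσ₀, if_pos (by rw [hgV, hsσ₀])]
  rw [hD] at h0
  exact Finsupp.mem_support_iff.1 hσ₀ (by
    rcases mul_eq_zero.1 h0 with h | h
    · exact h
    · exact absurd h (taylorSign_ne_zero σ₀ G))

/-- Transfer of cycles: the `u₀`-graded part of a cycle, with `G` removed, is again
a cycle, provided `u₀` has maximal cardinality among the multidegrees appearing. -/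
lemma cycT {G W u₀ : Finset V} {x : Finset (Finset V) →₀ k}
    (hx : ∀ σ ∈ x.support, G ∈ σ ∧ σ.sup id = W)
    (hcyc : taylorDiff k x = 0)
    (hmax : ∀ σ ∈ x.support, ((σ.erase G).sup id).card ≤ u₀.card) :
    taylorDiff k (Km k G (Finsupp.filter (fun σ => (σ.erase G).sup id = u₀) x)) = 0 := by
  classical
  set z := Finsupp.filter (fun σ => (σ.erase G).sup id = u₀) x with hz
  have hzsupp : z.support ⊆ x.support := by
    rw [hz, Finsupp.support_filter]
    exact Finset.filter_subset _ _
  have hzg : ∀ σ ∈ z.support, (σ.erase G).sup id = u₀ := by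
    intro σ hσ
    rw [hz, Finsupp.support_filter] at hσ
    exact (Finset.mem_filter.1 hσ).2
  have hKm : taylorDiff k (Km k G z)
      = ∑ σ ∈ z.support, (z σ * taylorSign k σ G) • taylorD k (σ.erase G) := by
    rw [Km, Finsupp.lsum_apply, map_finsuppSum]
    refine Finset.sum_congr rfl fun σ _ => ?_
    simp only [LinearMap.toSpanSingleton_apply, map_smul, taylorDiff_single, one_smul, smul_smul]
  rw [hKm]
  ext τ₁
  rw [Finset.sum_apply', Finsupp.coe_zero, Pi.zero_apply]
  by_cases hGτ₁ : G ∈ τ₁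
  · refine Finset.sum_eq_zero fun σ hσ => ?_
    rw [Finsupp.smul_apply, taylorD_apply_ne, smul_zero]
    intro F hF hFeq
    rw [← hFeq] at hGτ₁
    exact Finset.notMem_erase G σ (Finset.erase_subset F (σ.erase G) hGτ₁)
  · by_cases hsup : τ₁.sup id = u₀
    · -- main case
      rw [Finset.sum_subset hzsupp ?hvanish]
      case hvanish =>
        intro σ _ hσz
        rw [Finsupp.notMem_support_iff.1 hσz, zero_mul, zero_smul, Finsupp.coe_zero,
          Pi.zero_apply]
      have hstep : ∀ σ ∈ x.support,
          ((z σ * taylorSign k σ G) • taylorD k (σ.erase G)) τ₁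
            = (-(taylorSign k (insert G τ₁) G)) * (x σ * taylorD k σ (insert G τ₁)) := by
        intro σ hσ
        obtain ⟨hGσ, hsσ⟩ := hx σ hσ
        rw [Finsupp.smul_apply, smul_eq_mul]
        by_cases hex : ∃ F ∈ σ, σ.erase F = insert G τ₁
        · obtain ⟨F, hFσ, hFeq⟩ := hex
          have hFG : F ≠ G := by
            intro h
            subst h
            exact Finset.notMem_erase F σ (hFeq ▸ Finset.mem_insert_self F τ₁)
          have hF' : F ∈ σ.erase G := Finset.mem_erase.2 ⟨hFG, hFσ⟩
          have heq2 : (σ.erase G).erase F = τ₁ := by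
            rw [Finset.erase_right_comm, hFeq, Finset.erase_insert hGτ₁]
          have hgσ : (σ.erase G).sup id = u₀ := by
            refine (Finset.eq_of_subset_of_card_le ?_ (hmax σ hσ)).symm
            rw [← hsup, ← heq2]
            exact Finset.le_iff_subset.1 (Finset.sup_mono (Finset.erase_subset _ _))
          have hzσ : z σ = x σ := by
            rw [hz]
            exact Finsupp.filter_apply_pos _ x hgσ
          have hL : taylorD k (σ.erase G) τ₁ = taylorSign k (σ.erase G) F := by
            rw [← heq2, taylorD_apply_erase _ hF', if_pos (by rw [heq2, hsup, hgσ])]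
          have hsupστ : (insert G τ₁).sup id = σ.sup id := by
            have h1 : σ.sup id = G ⊔ (σ.erase G).sup id := by
              conv_lhs => rw [← Finset.insert_erase hGσ]
              rw [Finset.sup_insert]
              rfl
            rw [Finset.sup_insert, h1, hgσ, hsup]
            rfl
          have hR : taylorD k σ (insert G τ₁) = taylorSign k σ F := by
            rw [← hFeq, taylorD_apply_erase _ hFσ, if_pos (by rw [hFeq, hsupστ])]
          rw [hL, hR, hzσ, ← hFeq]
          linear_combination (x σ) * taylorSign_prod (k := k) σ hFσ hGσ hFG
        · have hL : taylorD k (σ.erase G) τ₁ = 0 := by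
            refine taylorD_apply_ne _ _ fun F hF hFeq => ?_
            have hFσ : F ∈ σ := Finset.mem_of_mem_erase hF
            have hFG : F ≠ G := (Finset.mem_erase.1 hF).1
            refine hex ⟨F, hFσ, ?_⟩
            have hGσF : G ∈ σ.erase F := Finset.mem_erase.2 ⟨fun h => hFG h.symm, hGσ⟩
            rw [← Finset.insert_erase hGσF, Finset.erase_right_comm, hFeq]
          have hR : taylorD k σ (insert G τ₁) = 0 := by
            refine taylorD_apply_ne _ _ fun F hF hFeq => hex ⟨F, hF, hFeq⟩
          rw [hL, hR, mul_zero, mul_zero, mul_zero]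
      rw [Finset.sum_congr rfl hstep, ← Finset.mul_sum, ← taylorDiff_apply, hcyc,
        Finsupp.coe_zero, Pi.zero_apply, mul_zero]
    · refine Finset.sum_eq_zero fun σ hσ => ?_
      rw [Finsupp.smul_apply]
      by_cases hex : ∃ F ∈ σ.erase G, (σ.erase G).erase F = τ₁
      · obtain ⟨F, hF, hFeq⟩ := hex
        rw [← hFeq, taylorD_apply_erase _ hF, if_neg, smul_zero]
        rw [hFeq, hzg σ hσ]
        exact hsup
      · rw [taylorD_apply_ne _ _ (fun F hF hFeq => hex ⟨F, hF, hFeq⟩), smul_zero]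

end Aux4

/-- The predicate for the "lower" part of the complex determined by a facet `G`:
sets of facets of cardinality `j`, containing `G`, of full multidegree, whose
multidegree drops after removing `G`. -/
abbrev Qp {V : Type*} [DecidableEq V] [LinearOrder V] (Δ : Finset (Finset V)) (G : Finset V)
    (j : ℕ) (σ : Finset (Finset V)) : Prop :=
  σ ⊆ Δ ∧ σ.card = j ∧ G ∈ σ ∧ σ.sup id = vertexSet Δ ∧ (σ.erase G).sup id ≠ vertexSet Δ

section Aux5

open Finsupp

variable {k : Type*} [Field k] {V : Type*} [DecidableEq V] [LinearOrder V]

lemma map_single_sum (L : (Finset (Finset V) →₀ k) →ₗ[k] (Finset (Finset V) →₀ k))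
    (y : Finset (Finset V) →₀ k) :
    L y = ∑ τ ∈ y.support, y τ • L (Finsupp.single τ (1:k)) := by
  conv_lhs => rw [← Finsupp.sum_single y, map_finsuppSum]
  refine Finset.sum_congr rfl fun τ _ => ?_
  rw [← map_smul]
  congr 1
  rw [Finsupp.smul_single, smul_eq_mul, mul_one]

/-- The filtration induction: if all strictly lower strands are exact, cycles
supported on `Qp` are boundaries from `Qp`. -/
lemma lemP (Δ : Finset (Finset V)) (G : Finset V) (hG : G ∈ Δ) (m : ℕ)
    (hA : ∀ u : Finset V, u ⊂ vertexSet Δ → u ∪ G = vertexSet Δ →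
      ∀ y ∈ SP k (fun τ => τ ⊆ Δ ∧ τ.card = m ∧ τ.sup id = u), taylorDiff k y = 0 →
        ∃ y' ∈ SP k (fun τ => τ ⊆ Δ ∧ τ.card = m + 1 ∧ τ.sup id = u), taylorDiff k y' = y) :
    ∀ x ∈ SP k (Qp Δ G (m+1)), taylorDiff k x = 0 →
      ∃ w ∈ SP k (Qp Δ G (m+2)), taylorDiff k w = x := by
  classical
  set B : ℕ := 2 ^ ((vertexSet Δ).card + 1) with hB
  have hBpos : 0 < B := by rw [hB]; positivity
  suffices H : ∀ N : ℕ, ∀ x, x ∈ SP k (Qp Δ G (m+1)) → taylorDiff k x = 0 →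
      (∑ u ∈ x.support.image (fun σ => (σ.erase G).sup id), B ^ u.card) ≤ N →
      ∃ w ∈ SP k (Qp Δ G (m+2)), taylorDiff k w = x by
    intro x hx hc
    exact H _ x hx hc le_rfl
  intro N
  induction N with
  | zero =>
    intro x hx hc hμx
    have hx0 : x = 0 := by
      by_contra h0
      obtain ⟨σ, hσ⟩ := Finsupp.support_nonempty_iff.2 h0
      have h1 : (σ.erase G).sup id ∈ x.support.image (fun σ => (σ.erase G).sup id) :=
        Finset.mem_image_of_mem _ hσ
      have h2 : 0 < ∑ u ∈ x.support.image (fun σ => (σ.erase G).sup id), B ^ u.card :=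
        Finset.sum_pos' (fun u _ => Nat.zero_le _) ⟨_, h1, Nat.pow_pos hBpos⟩
      omega
    exact ⟨0, Submodule.zero_mem _, by rw [map_zero, hx0]⟩
  | succ N ih =>
    intro x hx hc hμx
    by_cases hx0 : x = 0
    · exact ⟨0, Submodule.zero_mem _, by rw [map_zero, hx0]⟩
    have hsupp : x.support.Nonempty := Finsupp.support_nonempty_iff.2 hx0
    obtain ⟨u₀, hu₀mem, hu₀max⟩ :=
      Finset.exists_max_image (x.support.image (fun σ => (σ.erase G).sup id))
        (fun u => u.card) (hsupp.image _)
    obtain ⟨σ₀, hσ₀, hgσ₀⟩ := Finset.mem_image.1 hu₀mem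
    obtain ⟨hσ₀Δ, hσ₀card, hGσ₀, hσ₀sup, hσ₀g⟩ := mem_SP.1 hx σ₀ hσ₀
    have hu₀ne : u₀ ≠ vertexSet Δ := by rw [← hgσ₀]; exact hσ₀g
    have hu₀le : u₀ ⊆ vertexSet Δ := by
      rw [← hgσ₀, ← hσ₀sup]
      exact Finset.le_iff_subset.1 (Finset.sup_mono (Finset.erase_subset _ _))
    have hu₀lt : u₀ ⊂ vertexSet Δ := Finset.ssubset_iff_subset_ne.2 ⟨hu₀le, hu₀ne⟩
    have hσ₀dec : σ₀.sup id = G ⊔ (σ₀.erase G).sup id := by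
      conv_lhs => rw [← Finset.insert_erase hGσ₀]
      rw [Finset.sup_insert]
      rfl
    have hu₀G : u₀ ∪ G = vertexSet Δ := by
      rw [← hσ₀sup, hσ₀dec, hgσ₀]
      rw [Finset.sup_eq_union, Finset.union_comm]
    -- the `u₀`-part of the cycle, with `G` removed, is a cycle of the `u₀`-strand
    set z := Finsupp.filter (fun σ => (σ.erase G).sup id = u₀) x with hzdef
    set w₂ := Finsupp.filter (fun σ => ¬ (σ.erase G).sup id = u₀) x with hw₂def
    have hsplit : z + w₂ = x := by
      rw [hzdef, hw₂def]
      exact Finsupp.filter_pos_add_filter_neg x _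
    have hzmem : z ∈ SP k (fun σ => Qp Δ G (m+1) σ ∧ (σ.erase G).sup id = u₀) := by
      rw [mem_SP]
      intro σ hσ
      rw [hzdef, Finsupp.support_filter, Finset.mem_filter] at hσ
      exact ⟨mem_SP.1 hx σ hσ.1, hσ.2⟩
    have hw₂mem : w₂ ∈ SP k (fun σ => Qp Δ G (m+1) σ ∧ ¬ (σ.erase G).sup id = u₀) := by
      rw [mem_SP]
      intro σ hσ
      rw [hw₂def, Finsupp.support_filter, Finset.mem_filter] at hσ
      exact ⟨mem_SP.1 hx σ hσ.1, hσ.2⟩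
    have hKzmem : Km k G z ∈ SP k (fun τ => τ ⊆ Δ ∧ τ.card = m ∧ τ.sup id = u₀) := by
      refine Km_mem_SP hzmem fun σ hσ => ?_
      obtain ⟨⟨h1, h2, h3, h4, h5⟩, h6⟩ := hσ
      refine ⟨(Finset.erase_subset _ _).trans h1, ?_, h6⟩
      rw [Finset.card_erase_of_mem h3, h2]
      omega
    have hKzcyc : taylorDiff k (Km k G z) = 0 := by
      rw [hzdef]
      refine cycT (W := vertexSet Δ) ?_ hc ?_
      · exact fun σ hσ => ⟨(mem_SP.1 hx σ hσ).2.2.1, (mem_SP.1 hx σ hσ).2.2.2.1⟩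
      · exact fun σ hσ => hu₀max _ (Finset.mem_image_of_mem _ hσ)
    obtain ⟨y', hy'mem, hy'eq⟩ := hA u₀ hu₀lt hu₀G (Km k G z) hKzmem hKzcyc
    have hGτ' : ∀ τ' ∈ y'.support, G ∉ τ' := by
      intro τ' hτ' hGin
      obtain ⟨h1, h2, h3⟩ := mem_SP.1 hy'mem τ' hτ'
      have hsub : G ⊆ u₀ := by
        rw [← h3]
        exact Finset.le_sup (f := id) hGin
      exact hu₀ne (by rw [← hu₀G, Finset.union_eq_left.2 hsub])
    -- the error term
    set E := taylorDiff k (Jm k G y') + Jm k G (taylorDiff k y') with hEdef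
    have hEmem : E ∈ SP k (fun σ => Qp Δ G (m+1) σ ∧ (σ.erase G).sup id ⊂ u₀) := by
      have hDJ : taylorDiff k (Jm k G y')
          = ∑ τ' ∈ y'.support, y' τ' • taylorDiff k (Jm k G (Finsupp.single τ' (1:k))) := by
        have h := map_single_sum ((taylorDiff k).comp (Jm k G)) y'
        simpa only [LinearMap.comp_apply] using h
      have hJD : Jm k G (taylorDiff k y')
          = ∑ τ' ∈ y'.support, y' τ' • Jm k G (taylorD k τ') := by
        have h := map_single_sum ((Jm k G).comp (taylorDiff k)) y'
        simp only [LinearMap.comp_apply] at h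
        rw [h]
        refine Finset.sum_congr rfl fun τ' _ => ?_
        rw [taylorDiff_single, one_smul]
      have h1 : E = ∑ τ' ∈ y'.support, y' τ' •
          (taylorDiff k (Jm k G (Finsupp.single τ' (1:k))) + Jm k G (taylorD k τ')) := by
        rw [hEdef, hDJ, hJD, ← Finset.sum_add_distrib]
        exact Finset.sum_congr rfl fun τ' _ => (smul_add _ _ _).symm
      rw [h1]
      refine Submodule.sum_mem _ fun τ' hτ' => Submodule.smul_mem _ _ ?_
      obtain ⟨hτ'Δ, hτ'card, hτ'sup⟩ := mem_SP.1 hy'mem τ' hτ'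
      have hGnot := hGτ' τ' hτ'
      have hitez : (if G ≤ τ'.sup id then Finsupp.single τ' (1:k) else 0) = 0 := by
        rw [if_neg]
        intro hle
        rw [hτ'sup] at hle
        exact hu₀ne (by rw [← hu₀G, Finset.union_eq_left.2 hle])
      have hk2 := key2 (k := k) τ' hGnot
      rw [hitez, sub_zero] at hk2
      refine SP_mono ?_ hk2
      rintro σ ⟨F, hFτ', rfl, hne, hsupeq⟩
      have hGe : G ∉ τ'.erase F := fun h => hGnot (Finset.mem_of_mem_erase h)
      have hlt_sub : (τ'.erase F).sup id ⊆ u₀ := by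
        rw [← hτ'sup]
        exact Finset.le_iff_subset.1 (Finset.sup_mono (Finset.erase_subset _ _))
      have hlt_ne : (τ'.erase F).sup id ≠ u₀ := by
        rw [← hτ'sup]
        exact hne
      refine ⟨⟨?_, ?_, Finset.mem_insert_self _ _, ?_, ?_⟩, ?_⟩
      · intro H hH
        rcases Finset.mem_insert.1 hH with h | h
        · exact h ▸ hG
        · exact hτ'Δ (Finset.mem_of_mem_erase h)
      · rw [Finset.card_insert_of_notMem hGe, Finset.card_erase_of_mem hFτ', hτ'card]
        omega
      · rw [hsupeq, Finset.sup_insert, hτ'sup, ← hu₀G]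
        show G ⊔ u₀ = u₀ ∪ G
        rw [Finset.sup_eq_union, Finset.union_comm]
      · rw [Finset.erase_insert hGe]
        intro hEq
        exact hu₀ne (Finset.Subset.antisymm hu₀le (hEq ▸ hlt_sub))
      · rw [Finset.erase_insert hGe]
        exact Finset.ssubset_iff_subset_ne.2 ⟨hlt_sub, hlt_ne⟩
    have hzGmem : z ∈ SP k (fun σ => G ∈ σ) := SP_mono (fun σ h => h.1.2.2.1) hzmem
    have hJKz : Jm k G (Km k G z) = z := Jm_Km hzGmem
    have hE2 : taylorDiff k (Jm k G y') = E - z := by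
      rw [hEdef, hy'eq, hJKz]
      abel
    have hxz : x + taylorDiff k (Jm k G y') = w₂ + E := by
      rw [hE2, ← hsplit]
      abel
    set x' := x + taylorDiff k (Jm k G y') with hx'def
    have hx'cyc : taylorDiff k x' = 0 := by
      rw [hx'def, map_add, hc, taylorDiff_taylorDiff, add_zero]
    have hx'mem : x' ∈ SP k (Qp Δ G (m+1)) := by
      rw [hxz]
      exact Submodule.add_mem _ (SP_mono (fun σ h => h.1) hw₂mem) (SP_mono (fun σ h => h.1) hEmem)
    -- the measure decreases
    have hsubs : x'.support.image (fun σ => (σ.erase G).sup id)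
        ⊆ ((x.support.image (fun σ => (σ.erase G).sup id)).erase u₀)
            ∪ (u₀.powerset.erase u₀) := by
      intro u hu
      obtain ⟨σ, hσ, rfl⟩ := Finset.mem_image.1 hu
      have hσ' : σ ∈ w₂.support ∪ E.support := by
        have h1 : x'.support ⊆ w₂.support ∪ E.support := by
          rw [hxz]
          exact Finsupp.support_add
        exact h1 hσ
      rcases Finset.mem_union.1 hσ' with h | h
      · refine Finset.mem_union_left _ ?_
        obtain ⟨h1, h2⟩ := mem_SP.1 hw₂mem σ h
        have h3 : σ ∈ x.support := by
          rw [hw₂def, Finsupp.support_filter, Finset.mem_filter] at h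
          exact h.1
        exact Finset.mem_erase.2 ⟨h2, Finset.mem_image_of_mem _ h3⟩
      · refine Finset.mem_union_right _ ?_
        have h2 := (mem_SP.1 hEmem σ h).2
        exact Finset.mem_erase.2 ⟨h2.ne, Finset.mem_powerset.2 h2.subset⟩
    have hpow : (∑ u ∈ u₀.powerset.erase u₀, B ^ u.card) < B ^ u₀.card := by
      rcases Finset.eq_empty_or_nonempty u₀ with h0 | h0
      · subst h0
        simp
      · obtain ⟨c, hcc⟩ : ∃ c, u₀.card = c + 1 :=
          ⟨u₀.card - 1, by have := Finset.card_pos.2 h0; omega⟩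
        have hstep : ∀ u ∈ u₀.powerset.erase u₀, B ^ u.card ≤ B ^ c := by
          intro u hu
          obtain ⟨hne2, hsub2⟩ := Finset.mem_erase.1 hu
          have hlt2 : u.card < u₀.card :=
            Finset.card_lt_card (lt_of_le_of_ne
              (Finset.le_iff_subset.2 (Finset.mem_powerset.1 hsub2)) hne2)
          exact Nat.pow_le_pow_right hBpos (by omega)
        have hcard : (u₀.powerset.erase u₀).card < B := by
          have h1 : (u₀.powerset.erase u₀).card ≤ u₀.powerset.card :=
            Finset.card_le_card (Finset.erase_subset _ _)
          rw [Finset.card_powerset] at h1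
          have h2 : u₀.card ≤ (vertexSet Δ).card := Finset.card_le_card hu₀le
          have h3 : (2:ℕ) ^ u₀.card ≤ 2 ^ (vertexSet Δ).card :=
            Nat.pow_le_pow_right (by omega) h2
          have h4 : (2:ℕ) ^ (vertexSet Δ).card < B := by
            rw [hB]
            exact Nat.pow_lt_pow_succ (by omega)
          omega
        calc (∑ u ∈ u₀.powerset.erase u₀, B ^ u.card)
            ≤ (u₀.powerset.erase u₀).card • B ^ c := Finset.sum_le_card_nsmul _ _ _ hstep
          _ = (u₀.powerset.erase u₀).card * B ^ c := smul_eq_mul _ _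
          _ < B * B ^ c := by
              have hpos : 0 < B ^ c := Nat.pow_pos hBpos
              exact (Nat.mul_lt_mul_right hpos).2 hcard
          _ = B ^ u₀.card := by rw [hcc, pow_succ, mul_comm]
    have hμ' : (∑ u ∈ x'.support.image (fun σ => (σ.erase G).sup id), B ^ u.card) ≤ N := by
      have hle1 : (∑ u ∈ x'.support.image (fun σ => (σ.erase G).sup id), B ^ u.card)
          ≤ ∑ u ∈ (((x.support.image (fun σ => (σ.erase G).sup id)).erase u₀)
              ∪ (u₀.powerset.erase u₀)), B ^ u.card :=
        Finset.sum_le_sum_of_subset hsubs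
      have hle2 := Finset.sum_union_inter
        (s₁ := (x.support.image (fun σ => (σ.erase G).sup id)).erase u₀)
        (s₂ := u₀.powerset.erase u₀) (f := fun u => B ^ u.card)
      have heq3 : (∑ u ∈ (x.support.image (fun σ => (σ.erase G).sup id)).erase u₀, B ^ u.card)
          + B ^ u₀.card
          = ∑ u ∈ x.support.image (fun σ => (σ.erase G).sup id), B ^ u.card :=
        Finset.sum_erase_add _ _ hu₀mem
      omega
    obtain ⟨w'', hw''mem, hw''eq⟩ := ih x' hx'mem hx'cyc hμ'
    refine ⟨w'' - Jm k G y', ?_, ?_⟩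
    · refine Submodule.sub_mem _ hw''mem ?_
      refine Jm_mem_SP hy'mem fun τ' h => ?_
      obtain ⟨h1, h2, h3⟩ := h
      have hGn : G ∉ τ' := by
        intro hGin
        have hsub : G ⊆ u₀ := by
          rw [← h3]
          exact Finset.le_sup (f := id) hGin
        exact hu₀ne (by rw [← hu₀G, Finset.union_eq_left.2 hsub])
      refine ⟨?_, ?_, Finset.mem_insert_self _ _, ?_, ?_⟩
      · intro H hH
        rcases Finset.mem_insert.1 hH with hh | hh
        · exact hh ▸ hG
        · exact h1 hh
      · rw [Finset.card_insert_of_notMem hGn, h2]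
      · rw [Finset.sup_insert, h3, ← hu₀G]
        show G ⊔ u₀ = u₀ ∪ G
        rw [Finset.sup_eq_union, Finset.union_comm]
      · rw [Finset.erase_insert hGn, h3]
        exact hu₀ne
    · rw [map_sub, hw''eq, hx'def]
      abel

end Aux5

section Aux6

open Finsupp

variable {k : Type*} [Field k] {V : Type*} [DecidableEq V] [LinearOrder V]

/-- The main homological lemma: if all proper strands `u` with `u ∪ G = V(Δ)` are
exact in homological degree `m`, then the top strand is exact in degree `m+1`. -/
lemma lemM (Δ : Finset (Finset V)) (G : Finset V) (hG : G ∈ Δ) (m : ℕ)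
    (hA : ∀ u : Finset V, u ⊂ vertexSet Δ → u ∪ G = vertexSet Δ →
      ∀ y ∈ SP k (fun τ => τ ⊆ Δ ∧ τ.card = m ∧ τ.sup id = u), taylorDiff k y = 0 →
        ∃ y' ∈ SP k (fun τ => τ ⊆ Δ ∧ τ.card = m + 1 ∧ τ.sup id = u), taylorDiff k y' = y) :
    ∀ x ∈ SP k (fun σ => σ ⊆ Δ ∧ σ.card = m + 1 ∧ σ.sup id = vertexSet Δ),
      taylorDiff k x = 0 →
      ∃ w ∈ SP k (fun σ => σ ⊆ Δ ∧ σ.card = m + 2 ∧ σ.sup id = vertexSet Δ),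
        taylorDiff k w = x := by
  classical
  intro x hx hc
  have hGV : G ≤ vertexSet Δ := Finset.le_sup (f := id) hG
  set a := Finsupp.filter (fun σ => G ∈ σ) x with hadef
  set b := Finsupp.filter (fun σ => ¬ G ∈ σ) x with hbdef
  have hsplit : a + b = x := by
    rw [hadef, hbdef]
    exact Finsupp.filter_pos_add_filter_neg x _
  have hamem : a ∈ SP k (fun σ =>
      (σ ⊆ Δ ∧ σ.card = m + 1 ∧ σ.sup id = vertexSet Δ) ∧ G ∈ σ) := by
    rw [mem_SP]
    intro σ hσ
    rw [hadef, Finsupp.support_filter, Finset.mem_filter] at hσ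
    exact ⟨mem_SP.1 hx σ hσ.1, hσ.2⟩
  have hbmem : b ∈ SP k (fun σ =>
      (σ ⊆ Δ ∧ σ.card = m + 1 ∧ σ.sup id = vertexSet Δ) ∧ G ∉ σ) := by
    rw [mem_SP]
    intro σ hσ
    rw [hbdef, Finsupp.support_filter, Finset.mem_filter] at hσ
    exact ⟨mem_SP.1 hx σ hσ.1, hσ.2⟩
  -- the error decomposition of `∂ (Jm b)`
  have hDJ : taylorDiff k (Jm k G b)
      = ∑ τ ∈ b.support, b τ • taylorDiff k (Jm k G (Finsupp.single τ (1:k))) := by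
    have h := map_single_sum ((taylorDiff k).comp (Jm k G)) b
    simpa only [LinearMap.comp_apply] using h
  have hJD : Jm k G (taylorDiff k b)
      = ∑ τ ∈ b.support, b τ • Jm k G (taylorD k τ) := by
    have h := map_single_sum ((Jm k G).comp (taylorDiff k)) b
    simp only [LinearMap.comp_apply] at h
    rw [h]
    refine Finset.sum_congr rfl fun τ _ => ?_
    rw [taylorDiff_single, one_smul]
  have hbsum : b = ∑ τ ∈ b.support, b τ • Finsupp.single τ (1:k) := by
    have h := map_single_sum (LinearMap.id) b
    simpa only [LinearMap.id_apply] using h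
  have hsum : (∑ τ ∈ b.support, b τ • (taylorDiff k (Jm k G (Finsupp.single τ (1:k)))
          + Jm k G (taylorD k τ)
          - (if G ≤ τ.sup id then Finsupp.single τ (1:k) else 0)))
      = taylorDiff k (Jm k G b) + Jm k G (taylorDiff k b) - b := by
    calc (∑ τ ∈ b.support, b τ • (taylorDiff k (Jm k G (Finsupp.single τ (1:k)))
          + Jm k G (taylorD k τ)
          - (if G ≤ τ.sup id then Finsupp.single τ (1:k) else 0)))
        = ∑ τ ∈ b.support, (b τ • taylorDiff k (Jm k G (Finsupp.single τ (1:k)))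
            + b τ • Jm k G (taylorD k τ) - b τ • Finsupp.single τ (1:k)) := by
          refine Finset.sum_congr rfl fun τ hτ => ?_
          obtain ⟨⟨h1, h2, h3⟩, h4⟩ := mem_SP.1 hbmem τ hτ
          rw [if_pos (h3 ▸ hGV), smul_sub, smul_add]
      _ = taylorDiff k (Jm k G b) + Jm k G (taylorDiff k b) - b := by
          rw [Finset.sum_sub_distrib, Finset.sum_add_distrib, ← hDJ, ← hJD, ← hbsum]
  have hEmem : taylorDiff k (Jm k G b) + Jm k G (taylorDiff k b) - b
      ∈ SP k (fun σ => σ ⊆ Δ ∧ σ.card = m + 1 ∧ G ∈ σ ∧ σ.sup id = vertexSet Δ) := by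
    rw [← hsum]
    refine Submodule.sum_mem _ fun τ hτ => Submodule.smul_mem _ _ ?_
    obtain ⟨⟨h1, h2, h3⟩, h4⟩ := mem_SP.1 hbmem τ hτ
    refine SP_mono ?_ (key2 (k := k) τ h4)
    rintro σ ⟨F, hFτ, rfl, hne, hsupeq⟩
    have hGe : G ∉ τ.erase F := fun h => h4 (Finset.mem_of_mem_erase h)
    refine ⟨?_, ?_, Finset.mem_insert_self _ _, ?_⟩
    · intro H hH
      rcases Finset.mem_insert.1 hH with h | h
      · exact h ▸ hG
      · exact h1 (Finset.mem_of_mem_erase h)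
    · rw [Finset.card_insert_of_notMem hGe, Finset.card_erase_of_mem hFτ, h2]
      omega
    · rw [hsupeq, Finset.sup_insert, h3]
      show G ⊔ vertexSet Δ = vertexSet Δ
      exact sup_eq_right.2 hGV
  -- the reduced cycle
  set x1 := x - taylorDiff k (Jm k G b) with hx1def
  have hx1eq : x1 = a + Jm k G (taylorDiff k b)
      - (taylorDiff k (Jm k G b) + Jm k G (taylorDiff k b) - b) := by
    rw [hx1def, ← hsplit]
    abel
  have hDbmem : taylorDiff k b ∈ SP k (fun τ =>
      τ ⊆ Δ ∧ τ.card = m ∧ G ∉ τ ∧ τ.sup id = vertexSet Δ) := by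
    refine taylorDiff_mem_SP hbmem ?_
    rintro σ ⟨⟨h1, h2, h3⟩, h4⟩ F hF hsupeq
    refine ⟨(Finset.erase_subset _ _).trans h1, ?_, ?_, by rw [hsupeq, h3]⟩
    · rw [Finset.card_erase_of_mem hF, h2]
      omega
    · exact fun h => h4 (Finset.mem_of_mem_erase h)
  have hJDbmem : Jm k G (taylorDiff k b) ∈ SP k (fun σ =>
      σ ⊆ Δ ∧ σ.card = m + 1 ∧ G ∈ σ ∧ σ.sup id = vertexSet Δ) := by
    refine Jm_mem_SP hDbmem ?_
    rintro τ ⟨h1, h2, h3, h4⟩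
    refine ⟨?_, ?_, Finset.mem_insert_self _ _, ?_⟩
    · intro H hH
      rcases Finset.mem_insert.1 hH with h | h
      · exact h ▸ hG
      · exact h1 h
    · rw [Finset.card_insert_of_notMem h3, h2]
    · rw [Finset.sup_insert, h4]
      show G ⊔ vertexSet Δ = vertexSet Δ
      exact sup_eq_right.2 hGV
  have hx1mem : x1 ∈ SP k (fun σ =>
      σ ⊆ Δ ∧ σ.card = m + 1 ∧ G ∈ σ ∧ σ.sup id = vertexSet Δ) := by
    rw [hx1eq]
    refine Submodule.sub_mem _ (Submodule.add_mem _ ?_ hJDbmem) hEmem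
    exact SP_mono (fun σ h => ⟨h.1.1, h.1.2.1, h.2, h.1.2.2⟩) hamem
  have hx1cyc : taylorDiff k x1 = 0 := by
    rw [hx1def, map_sub, hc, taylorDiff_taylorDiff, zero_sub, neg_zero]
  have hx1low := lemE (k := k) (G := G) (W := vertexSet Δ)
    (fun σ hσ => ⟨(mem_SP.1 hx1mem σ hσ).2.2.1, (mem_SP.1 hx1mem σ hσ).2.2.2⟩) hx1cyc
  have hx1Qp : x1 ∈ SP k (Qp Δ G (m+1)) := by
    rw [mem_SP]
    intro σ hσ
    obtain ⟨h1, h2, h3, h4⟩ := mem_SP.1 hx1mem σ hσ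
    exact ⟨h1, h2, h3, h4, hx1low σ hσ⟩
  obtain ⟨w₁, hw₁mem, hw₁eq⟩ := lemP Δ G hG m hA x1 hx1Qp hx1cyc
  refine ⟨Jm k G b + w₁, ?_, ?_⟩
  · refine Submodule.add_mem _ ?_ (SP_mono (fun σ h => ⟨h.1, h.2.1, h.2.2.2.1⟩) hw₁mem)
    refine Jm_mem_SP hbmem ?_
    rintro τ ⟨⟨h1, h2, h3⟩, h4⟩
    refine ⟨?_, ?_, ?_⟩
    · intro H hH
      rcases Finset.mem_insert.1 hH with h | h
      · exact h ▸ hG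
      · exact h1 h
    · rw [Finset.card_insert_of_notMem h4, h2]
    · rw [Finset.sup_insert, h3]
      show G ⊔ vertexSet Δ = vertexSet Δ
      exact sup_eq_right.2 hGV
  · rw [map_add, hw₁eq, hx1def]
    abel

end Aux6

section Aux7

open Finsupp

variable {k : Type*} [Field k] {V : Type*} [DecidableEq V] [LinearOrder V]

lemma strand_fd (Δ : Finset (Finset V)) (i : ℕ) (u : Finset V) :
    FiniteDimensional k ↥(strand k Δ i u) := by
  rw [strand]
  apply FiniteDimensional.span_of_finite
  refine Set.Finite.subset
    (Set.Finite.image (fun σ => Finsupp.single σ (1:k)) Δ.powerset.finite_toSet) ?_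
  rintro x ⟨σ, h1, h2, h3, rfl⟩
  exact ⟨σ, Finset.mem_coe.2 (Finset.mem_powerset.2 h1), rfl⟩

lemma betti_zero_iff (Δ : Finset (Finset V)) (i : ℕ) (u : Finset V) :
    multigradedBetti k Δ i u = 0 ↔ taylorCycles k Δ i u ≤ taylorBoundaries k Δ i u := by
  haveI hfd : FiniteDimensional k ↥(strand k Δ i u) := strand_fd Δ i u
  haveI hfd2 : FiniteDimensional k ↥(taylorCycles k Δ i u) :=
    Submodule.finiteDimensional_of_le (inf_le_right : _ ≤ strand k Δ i u)
  constructor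
  · intro h
    have hle : taylorBoundaries k Δ i u ⊓ taylorCycles k Δ i u ≤ taylorCycles k Δ i u :=
      inf_le_right
    have hfr : Module.finrank k ↥(taylorCycles k Δ i u)
        ≤ Module.finrank k ↥(taylorBoundaries k Δ i u ⊓ taylorCycles k Δ i u) := by
      rw [multigradedBetti] at h
      omega
    have heq := Submodule.eq_of_le_of_finrank_le hle hfr
    calc taylorCycles k Δ i u = taylorBoundaries k Δ i u ⊓ taylorCycles k Δ i u := heq.symm
      _ ≤ taylorBoundaries k Δ i u := inf_le_left
  · intro h
    have heq : taylorBoundaries k Δ i u ⊓ taylorCycles k Δ i u = taylorCycles k Δ i u :=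
      le_antisymm inf_le_right (le_inf h le_rfl)
    rw [multigradedBetti, heq, Nat.sub_self]

lemma strand_induced (Δ : Finset (Finset V)) (u : Finset V) (j : ℕ) :
    strand k (induced Δ u) j u = strand k Δ j u := by
  rw [strand, strand]
  congr 1
  ext x
  constructor
  · rintro ⟨σ, h1, h2, h3, rfl⟩
    exact ⟨σ, h1.trans (Finset.filter_subset _ _), h2, h3, rfl⟩
  · rintro ⟨σ, h1, h2, h3, rfl⟩
    refine ⟨σ, ?_, h2, h3, rfl⟩
    intro F hF
    rw [induced, Finset.mem_filter]
    refine ⟨h1 hF, ?_⟩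
    rw [← h3]
    exact Finset.le_sup (f := id) hF

lemma betti_ne_bot {Δ : Finset (Finset V)} {i : ℕ} {u : Finset V}
    (h : multigradedBetti k Δ i u ≠ 0) : taylorCycles k Δ i u ≠ ⊥ := by
  intro hbot
  apply h
  rw [multigradedBetti, hbot]
  simp

end Aux7

/-- Let `Δ` be a simplicial forest with `n` vertices and more
than one facet with `β_{i,n}(Δ) ≠ 0`.  Then for every facet `G` of `Δ`, the induced
subcollection `Δ_[G]` has a complement `Δ_[u]` in `Δ` with
`β_{i-1,|u|}(Δ_[u]) ≠ 0`. -/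
theorem exists_complement_of_facet
    (Δ : Finset (Finset V)) (hfacet : IsAntichain (· ⊆ ·) (Δ : Set (Finset V)))
    (hne : ∅ ∉ Δ) (hforest : IsForest Δ) (hfacets : 1 < Δ.card)
    (n : ℕ) (hn : (vertexSet Δ).card = n)
    (i : ℕ) (hβ : gradedBetti k Δ i n ≠ 0)
    (G : Finset V) (hG : G ∈ Δ) :
    ∃ u : Finset V, Complements Δ G u ∧
      gradedBetti k (induced Δ u) (i - 1) u.card ≠ 0 := by
  classical
  by_contra hcon
  push_neg at hcon
  -- reduce to the top multidegree
  have hβV : multigradedBetti k Δ i (vertexSet Δ) ≠ 0 := by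
    rw [gradedBetti, ← hn, Finset.powersetCard_self, Finset.sum_singleton] at hβ
    exact hβ
  obtain ⟨F₀, hF₀, hF₀ne⟩ := Finset.exists_mem_ne hfacets G
  have hGV : G ⊆ vertexSet Δ := Finset.le_sup (f := id) hG
  have hGlt : G ⊂ vertexSet Δ := by
    have hns : ¬ F₀ ⊆ G := hfacet hF₀ hG hF₀ne
    obtain ⟨v, hv1, hv2⟩ := Finset.not_subset.1 hns
    exact (Finset.ssubset_iff_of_subset hGV).2
      ⟨v, (Finset.le_sup (f := id) hF₀ : F₀ ⊆ vertexSet Δ) hv1, hv2⟩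
  -- `i ≥ 1`
  have hi : i ≠ 0 := by
    intro h0
    subst h0
    apply hβV
    have hVne : vertexSet Δ ≠ ∅ := by
      have hF₀sub : F₀ ⊆ vertexSet Δ := Finset.le_sup (f := id) hF₀
      have hF₀ne' : F₀ ≠ ∅ := fun h => hne (h ▸ hF₀)
      obtain ⟨v, hv⟩ := Finset.nonempty_iff_ne_empty.2 hF₀ne'
      intro hE
      rw [hE] at hF₀sub
      exact absurd (hF₀sub hv) (Finset.notMem_empty v)
    have hstrand : strand k Δ 0 (vertexSet Δ) = ⊥ := by
      rw [strand, Submodule.span_eq_bot]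
      rintro x ⟨σ, h1, h2, h3, rfl⟩
      exfalso
      rw [Finset.card_eq_zero] at h2
      subst h2
      rw [Finset.sup_empty] at h3
      exact hVne h3.symm
    rw [multigradedBetti, taylorCycles, hstrand, inf_bot_eq]
    simp
  obtain ⟨m, rfl⟩ : ∃ m, i = m + 1 := ⟨i - 1, by omega⟩
  -- the strand-exactness hypothesis from the assumed non-existence of complements
  have hA : ∀ u : Finset V, u ⊂ vertexSet Δ → u ∪ G = vertexSet Δ →
      ∀ y ∈ SP k (fun τ => τ ⊆ Δ ∧ τ.card = m ∧ τ.sup id = u), taylorDiff k y = 0 →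
        ∃ y' ∈ SP k (fun τ => τ ⊆ Δ ∧ τ.card = m + 1 ∧ τ.sup id = u),
          taylorDiff k y' = y := by
    intro u hu1 hu2 y hy hyc
    have hbz : multigradedBetti k Δ m u = 0 := by
      by_contra hbnz
      have hZne := betti_ne_bot (k := k) hbnz
      have hSne : strand k Δ m u ≠ ⊥ := by
        intro h
        exact hZne (by rw [taylorCycles, h, inf_bot_eq])
      have hex : ∃ σ : Finset (Finset V), σ ⊆ Δ ∧ σ.card = m ∧ σ.sup id = u := by
        by_contra hns
        push_neg at hns
        apply hSne
        rw [strand, Submodule.span_eq_bot]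
        rintro x ⟨σ, h1, h2, h3, rfl⟩
        exact absurd h3 (hns σ h1 h2)
      obtain ⟨σw, hσw1, hσw2, hσw3⟩ := hex
      have hvind : vertexSet (induced Δ u) = u := by
        apply Finset.Subset.antisymm
        · refine Finset.le_iff_subset.1 (Finset.sup_le fun F hF => ?_)
          rw [induced, Finset.mem_filter] at hF
          exact Finset.le_iff_subset.2 hF.2
        · have h1 : ∀ F ∈ σw, F ∈ induced Δ u := by
            intro F hF
            rw [induced, Finset.mem_filter]
            exact ⟨hσw1 hF, Finset.le_iff_subset.1 (hσw3 ▸ Finset.le_sup (f := id) hF)⟩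
          have h2 : σw.sup id ≤ (induced Δ u).sup id :=
            Finset.sup_le fun F hF => Finset.le_sup (f := id) (h1 F hF)
          calc u = σw.sup id := hσw3.symm
            _ ⊆ vertexSet (induced Δ u) := Finset.le_iff_subset.1 h2
      have hgr : gradedBetti k (induced Δ u) m u.card ≠ 0 := by
        rw [gradedBetti, hvind, Finset.powersetCard_self, Finset.sum_singleton]
        rw [multigradedBetti, taylorCycles, taylorBoundaries,
          strand_induced Δ u m, strand_induced Δ u (m+1)]
        rw [multigradedBetti, taylorCycles, taylorBoundaries] at hbnz
        exact hbnz
      have hcomp : Complements Δ G u := by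
        refine ⟨hGlt, hu1, ?_, ?_⟩
        · rw [Finset.union_comm]
          exact hu2
        · rintro F hF ⟨hFG, hFu⟩
          rw [induced, Finset.mem_filter] at hFG hFu
          have hFeqG : F = G := by
            by_contra hne2
            exact hfacet hF hG hne2 hFG.2
          subst hFeqG
          have : u ∪ F = u := Finset.union_eq_left.2 hFu.2
          rw [this] at hu2
          exact (Finset.ssubset_iff_subset_ne.1 hu1).2 hu2
      have := hcon u hcomp
      rw [Nat.add_sub_cancel] at this
      exact hgr this
    have hle := (betti_zero_iff Δ m u).1 hbz
    have hyZ : y ∈ taylorCycles k Δ m u := by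
      rw [taylorCycles]
      refine Submodule.mem_inf.2 ⟨LinearMap.mem_ker.2 hyc, ?_⟩
      rw [strand_eq_SP]
      exact hy
    have hyB := hle hyZ
    rw [taylorBoundaries] at hyB
    obtain ⟨y', hy'mem, hy'eq⟩ := Submodule.mem_map.1 hyB
    refine ⟨y', ?_, hy'eq⟩
    rw [← strand_eq_SP]
    exact hy'mem
  -- apply the main lemma to contradict `hβV`
  apply hβV
  refine (betti_zero_iff Δ (m+1) (vertexSet Δ)).2 ?_
  intro x hx
  rw [taylorCycles] at hx
  obtain ⟨hxker, hxstr⟩ := Submodule.mem_inf.1 hx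
  rw [strand_eq_SP] at hxstr
  obtain ⟨w, hwmem, hweq⟩ := lemM Δ G hG m hA x hxstr (LinearMap.mem_ker.1 hxker)
  rw [taylorBoundaries]
  refine Submodule.mem_map.2 ⟨w, ?_, hweq⟩
  rw [strand_eq_SP]
  exact hwmem

end FacetPaper
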